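/- Let G = (A ∪ B, E) be a bipartite instance with strict preference lists, M a popular matching in G, α ∈ {0,±1}^{A∪B} a witness of M, and 𝒞 a connected component of the popular subgraph F_G. Then either α_u = 0 for all vertices u ∈ 𝒞, or α_u ∈ {−1,+1} for all vertices u ∈ 𝒞. Moreover, if 𝒞 contains one or more unstable vertices, then either all unstable vertices in 𝒞 are matched in M or none of them is matched in M. -/
import Mathlib


open scoped Classical

/-- A roommates instance: a (finite) graph `(V, adj)` together with a raw preference
relation: `pref u v w` means vertex `u` strictly prefers its neighbor `v` to its
neighbor `w`. -/
structure RoommatesInstance (V : Type) where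
  adj : V → V → Prop
  adj_symm : ∀ u v, adj u v → adj v u
  adj_irrefl : ∀ u, ¬ adj u u
  pref : V → V → V → Prop

namespace RoommatesInstance

variable {V : Type}

/-- The preference relation of each vertex is a strict linear order on its neighbors. -/
def StrictPrefs (G : RoommatesInstance V) : Prop :=
  (∀ u v w, G.pref u v w → G.adj u v ∧ G.adj u w) ∧
  (∀ u v w x, G.pref u v w → G.pref u w x → G.pref u v x) ∧
  (∀ u v w, G.pref u v w → ¬ G.pref u w v) ∧
  (∀ u v w, G.adj u v → G.adj u w → v ≠ w → G.pref u v w ∨ G.pref u w v)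

/-- A matching, encoded by the partner function of the corresponding perfect matching
`M̃` of `G̃` (the graph `G` with a self-loop added at every vertex): `m u = u` means
that `u` is unmatched in `M`, i.e. matched to itself along its self-loop in `M̃`. -/
structure Matching (G : RoommatesInstance V) where
  m : V → V
  invol : ∀ u, m (m u) = u
  adj_of_ne : ∀ u, m u ≠ u → G.adj u (m u)

variable (G : RoommatesInstance V)

/-- `u` considers `v` strictly better than `w`, where each of `v`, `w` is either a
neighbor of `u` or `u` itself (`u` itself stands for being unmatched, which every
vertex ranks below all of its neighbors). -/
def Better (u v w : V) : Prop :=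
  (w = u ∧ v ≠ u) ∨ (v ≠ u ∧ w ≠ u ∧ G.pref u v w)

/-- vertex `u` prefers matching `M` to matching `M'` -/
def Prefers (M M' : G.Matching) (u : V) : Prop :=
  G.Better u (M.m u) (M'.m u)

/-- `φ(M,M')`: the number of vertices preferring `M` to `M'` -/
noncomputable def phi [Fintype V] (M M' : G.Matching) : ℕ :=
  (Finset.univ.filter fun u => G.Prefers M M' u).card

/-- `Δ(M,M') = φ(M,M') - φ(M',M)` -/
noncomputable def delta [Fintype V] (M M' : G.Matching) : ℤ :=
  (G.phi M M' : ℤ) - (G.phi M' M : ℤ)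

/-- a matching `M` is popular if it never loses a head-to-head election -/
def Popular [Fintype V] (M : G.Matching) : Prop :=
  ∀ M' : G.Matching, 0 ≤ G.delta M M'

/-- `(u,v)` is a blocking edge to `M`: both endpoints prefer each other to their
assignments in `M̃`. -/
def Blocks (M : G.Matching) (u v : V) : Prop :=
  G.adj u v ∧ G.Better u v (M.m u) ∧ G.Better v u (M.m v)

/-- `(u,v)` is a negative edge to `M`: both endpoints prefer their assignments in `M̃`
to each other. -/
def Negative (M : G.Matching) (u v : V) : Prop :=
  G.adj u v ∧ G.Better u (M.m u) v ∧ G.Better v (M.m v) u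

/-- `cost_M` on the edges of `G̃`: `cost_M(u,v) = 2` for a blocking edge, `-2` for a
negative edge, `0` otherwise; `cost_M(u,u) = 0` if `u` is unmatched in `M` and `-1`
otherwise. -/
noncomputable def cost (M : G.Matching) (u v : V) : ℤ :=
  if u = v then (if M.m u = u then 0 else -1)
  else if G.Blocks M u v then 2
  else if G.Negative M u v then -2
  else 0

/-- a stable matching: no blocking edge -/
def Stable (M : G.Matching) : Prop := ∀ u v, ¬ G.Blocks M u v

/-- the number of edges of a matching -/
noncomputable def msize [Fintype V] (M : G.Matching) : ℕ :=
  (Finset.univ.filter fun u => M.m u ≠ u).card / 2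

theorem cost_comm (M : G.Matching) (u v : V) : G.cost M u v = G.cost M v u := by
  unfold cost
  rcases eq_or_ne u v with rfl | huv
  · rfl
  · rw [if_neg huv, if_neg (Ne.symm huv)]
    have hb : G.Blocks M u v ↔ G.Blocks M v u :=
      ⟨fun ⟨h1, h2, h3⟩ => ⟨G.adj_symm _ _ h1, h3, h2⟩,
       fun ⟨h1, h2, h3⟩ => ⟨G.adj_symm _ _ h1, h3, h2⟩⟩
    have hn : G.Negative M u v ↔ G.Negative M v u :=
      ⟨fun ⟨h1, h2, h3⟩ => ⟨G.adj_symm _ _ h1, h3, h2⟩,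
       fun ⟨h1, h2, h3⟩ => ⟨G.adj_symm _ _ h1, h3, h2⟩⟩
    simp only [hb, hn]

end RoommatesInstance

namespace RoommatesInstance

variable {V : Type} (G : RoommatesInstance V)

/-- A witness of the popularity of `M`: an optimal dual solution, i.e. a vector `α`
with `Σ_u α_u = 0`, `α_u + α_v ≥ cost_M(u,v)` for every edge `(u,v)` and
`α_u ≥ cost_M(u,u)` for every vertex `u`. -/
def IsWitness [Fintype V] (M : G.Matching) (α : V → ℝ) : Prop :=
  (∑ u, α u) = 0 ∧
  (∀ u v, G.adj u v → (G.cost M u v : ℝ) ≤ α u + α v) ∧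
  (∀ u, (G.cost M u u : ℝ) ≤ α u)

/-- `(u,v)` is a popular edge: it belongs to some popular matching of `G`. -/
def PopularEdge [Fintype V] (u v : V) : Prop :=
  u ≠ v ∧ ∃ N : G.Matching, G.Popular N ∧ N.m u = v

/-- `u` is an unstable vertex: it is left unmatched in some stable matching of `G`. -/
def Unstable (u : V) : Prop :=
  ∃ S : G.Matching, G.Stable S ∧ S.m u = u

/-- `u` and `v` lie in the same connected component of the popular subgraph `F_G`
(the subgraph of `G` on the popular edges). -/
def PopConn [Fintype V] : V → V → Prop :=
  Relation.ReflTransGen (G.PopularEdge)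

end RoommatesInstance

namespace RoommatesAux
open RoommatesInstance

variable {V : Type} {G : RoommatesInstance V}

lemma better_irrefl (hG : G.StrictPrefs) (u x : V) : ¬ G.Better u x x := by
  rintro (⟨h1, h2⟩ | ⟨h1, h2, h3⟩)
  · exact h2 h1
  · exact hG.2.2.1 u x x h3 h3

lemma better_asymm (hG : G.StrictPrefs) {u x y : V} (h : G.Better u x y) :
    ¬ G.Better u y x := by
  rcases h with ⟨h1, h2⟩ | ⟨h1, h2, h3⟩ <;>
    rintro (⟨g1, g2⟩ | ⟨g1, g2, g3⟩)
  · exact h2 g1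
  · exact g1 h1
  · exact h1 g1
  · exact hG.2.2.1 u x y h3 g3

lemma ne_of_adj (u x : V) (h : G.adj u x) : x ≠ u := by
  rintro rfl; exact G.adj_irrefl _ h

lemma better_total (hG : G.StrictPrefs) {u x y : V}
    (hx : x = u ∨ G.adj u x) (hy : y = u ∨ G.adj u y) (hxy : x ≠ y) :
    G.Better u x y ∨ G.Better u y x := by
  rcases hx with rfl | hx
  · rcases hy with rfl | hy
    · exact absurd rfl hxy
    · exact Or.inr (Or.inl ⟨rfl, ne_of_adj _ _ hy⟩)
  · rcases hy with rfl | hy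
    · exact Or.inl (Or.inl ⟨rfl, ne_of_adj _ _ hx⟩)
    · rcases hG.2.2.2 u x y hx hy hxy with h | h
      · exact Or.inl (Or.inr ⟨ne_of_adj _ _ hx, ne_of_adj _ _ hy, h⟩)
      · exact Or.inr (Or.inr ⟨ne_of_adj _ _ hy, ne_of_adj _ _ hx, h⟩)

/-- the vote of `u` in the election `N` vs `M`, as an integer -/
noncomputable def vote (G : RoommatesInstance V) (N M : G.Matching) (u : V) : ℤ :=
  (if G.Prefers N M u then 1 else 0) - (if G.Prefers M N u then 1 else 0)

lemma delta_eq_sum_vote [Fintype V] (N M : G.Matching) :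
    G.delta N M = ∑ u, vote G N M u := by
  unfold RoommatesInstance.delta RoommatesInstance.phi vote
  rw [Finset.sum_sub_distrib]
  push_cast [Finset.card_filter]
  rfl

/-- the contribution of the `Ñ`-edge at `u` to `2·Δ(N,M)` -/
noncomputable def gcost (G : RoommatesInstance V) (M N : G.Matching) (u : V) : ℤ :=
  if N.m u = u then 2 * G.cost M u u else G.cost M u (N.m u)

lemma vote_pair (hG : G.StrictPrefs) [Fintype V] (M N : G.Matching) (u : V) :
    vote G N M u + vote G N M (N.m u) = gcost G M N u := by
  by_cases hw : N.m u = u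
  · -- self-loop at u
    rw [hw]
    have h1 : ¬ G.Prefers N M u := by
      rw [RoommatesInstance.Prefers, hw]
      rintro (⟨_, h⟩ | ⟨h, _⟩) <;> exact h rfl
    by_cases hm : M.m u = u
    · have h2 : ¬ G.Prefers M N u := by
        rw [RoommatesInstance.Prefers, hw, hm]
        exact better_irrefl hG u u
      simp [vote, gcost, hw, h1, h2, RoommatesInstance.cost, hm]
    · have h2 : G.Prefers M N u := by
        rw [RoommatesInstance.Prefers, hw]
        exact Or.inl ⟨rfl, hm⟩
      simp [vote, gcost, hw, h1, h2, RoommatesInstance.cost, hm]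
  · have hadj : G.adj u (N.m u) := N.adj_of_ne u hw
    have hNw : N.m (N.m u) = u := N.invol u
    have huw : ¬ (u = N.m u) := fun h => hw h.symm
    by_cases hmu : M.m u = N.m u
    · -- M and N agree at u
      have hmw : M.m (N.m u) = u := by rw [← hmu, M.invol]
      have h1 : ¬ G.Prefers N M u := by
        rw [RoommatesInstance.Prefers, hmu]; exact better_irrefl hG u _
      have h2 : ¬ G.Prefers M N u := by
        rw [RoommatesInstance.Prefers, hmu]; exact better_irrefl hG u _
      have h3 : ¬ G.Prefers N M (N.m u) := by
        rw [RoommatesInstance.Prefers, hNw, hmw]; exact better_irrefl hG _ _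
      have h4 : ¬ G.Prefers M N (N.m u) := by
        rw [RoommatesInstance.Prefers, hNw, hmw]; exact better_irrefl hG _ _
      have hb : ¬ G.Blocks M u (N.m u) := by
        rintro ⟨_, h, _⟩; rw [hmu] at h; exact better_irrefl hG u _ h
      have hn : ¬ G.Negative M u (N.m u) := by
        rintro ⟨_, h, _⟩; rw [hmu] at h; exact better_irrefl hG u _ h
      simp [vote, gcost, hw, h1, h2, h3, h4, RoommatesInstance.cost, huw, hb, hn]
    · -- M and N differ at u (and hence at N.m u)
      have hmw : M.m (N.m u) ≠ u := fun h => hmu (by have h2 := M.invol (N.m u); rw [h] at h2; exact h2)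
      have hMu : M.m u = u ∨ G.adj u (M.m u) := by
        by_cases h : M.m u = u
        · exact Or.inl h
        · exact Or.inr (M.adj_of_ne u h)
      have hMw : M.m (N.m u) = N.m u ∨ G.adj (N.m u) (M.m (N.m u)) := by
        by_cases h : M.m (N.m u) = N.m u
        · exact Or.inl h
        · exact Or.inr ((N.m u |> M.adj_of_ne) h)
      have t1 : G.Better u (N.m u) (M.m u) ∨ G.Better u (M.m u) (N.m u) :=
        better_total hG (Or.inr hadj) hMu (fun h => hmu h.symm)
      have t2 : G.Better (N.m u) u (M.m (N.m u)) ∨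
          G.Better (N.m u) (M.m (N.m u)) u :=
        better_total hG (Or.inr (G.adj_symm _ _ hadj)) hMw (fun h => hmw h.symm)
      have e1 : G.Prefers N M u ↔ G.Better u (N.m u) (M.m u) := Iff.rfl
      have e2 : G.Prefers M N u ↔ G.Better u (M.m u) (N.m u) := Iff.rfl
      have e3 : G.Prefers N M (N.m u) ↔ G.Better (N.m u) u (M.m (N.m u)) := by
        rw [RoommatesInstance.Prefers, hNw]
      have e4 : G.Prefers M N (N.m u) ↔ G.Better (N.m u) (M.m (N.m u)) u := by
        rw [RoommatesInstance.Prefers, hNw]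
      rcases t1 with hb1 | hb1' <;> rcases t2 with hb2 | hb2'
      · -- blocking edge
        have hB : G.Blocks M u (N.m u) := ⟨hadj, hb1, hb2⟩
        simp [vote, gcost, hw, e1, e2, e3, e4, hb1, hb2,
          better_asymm hG hb1, better_asymm hG hb2,
          RoommatesInstance.cost, huw, hB]
      · have hB : ¬ G.Blocks M u (N.m u) := by
          rintro ⟨_, _, h⟩; exact better_asymm hG hb2' h
        have hN : ¬ G.Negative M u (N.m u) := by
          rintro ⟨_, h, _⟩; exact better_asymm hG hb1 h
        simp [vote, gcost, hw, e1, e2, e3, e4, hb1, hb2',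
          better_asymm hG hb1, better_asymm hG hb2',
          RoommatesInstance.cost, huw, hB, hN]
      · have hB : ¬ G.Blocks M u (N.m u) := by
          rintro ⟨_, h, _⟩; exact better_asymm hG hb1' h
        have hN : ¬ G.Negative M u (N.m u) := by
          rintro ⟨_, _, h⟩; exact better_asymm hG hb2 h
        simp [vote, gcost, hw, e1, e2, e3, e4, hb1', hb2,
          better_asymm hG hb1', better_asymm hG hb2,
          RoommatesInstance.cost, huw, hB, hN]
      · -- negative edge
        have hN : G.Negative M u (N.m u) := ⟨hadj, hb1', hb2'⟩
        have hB : ¬ G.Blocks M u (N.m u) := by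
          rintro ⟨_, h, _⟩; exact better_asymm hG hb1' h
        simp [vote, gcost, hw, e1, e2, e3, e4, hb1', hb2',
          better_asymm hG hb1', better_asymm hG hb2',
          RoommatesInstance.cost, huw, hB, hN]

lemma sum_comp_invol [Fintype V] {β : Type*} [AddCommMonoid β]
    (N : G.Matching) (f : V → β) : (∑ u, f (N.m u)) = ∑ u, f u :=
  Equiv.sum_comp (Function.Involutive.toPerm N.m N.invol) f

lemma sum_gcost [Fintype V] (hG : G.StrictPrefs) (M N : G.Matching) :
    (∑ u, gcost G M N u) = 2 * G.delta N M := by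
  have h : ∀ u, vote G N M u + vote G N M (N.m u) = gcost G M N u :=
    vote_pair hG M N
  calc (∑ u, gcost G M N u)
      = ∑ u, (vote G N M u + vote G N M (N.m u)) := by
        exact Finset.sum_congr rfl fun u _ => (h u).symm
    _ = (∑ u, vote G N M u) + ∑ u, vote G N M (N.m u) := Finset.sum_add_distrib
    _ = 2 * G.delta N M := by
        rw [sum_comp_invol N (vote G N M), delta_eq_sum_vote]; ring

lemma tight [Fintype V] (hG : G.StrictPrefs) (M N : G.Matching) {α : V → ℝ}
    (hα : G.IsWitness M α) (hd : 0 ≤ G.delta N M) (u : V) :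
    (gcost G M N u : ℝ) = α u + α (N.m u) := by
  set h : V → ℝ := fun u => α u + α (N.m u) - (gcost G M N u : ℝ) with hh
  have hnn : ∀ w ∈ Finset.univ, 0 ≤ h w := by
    intro w _
    by_cases hw : N.m w = w
    · have := hα.2.2 w
      simp only [hh, gcost, if_pos hw, hw]
      push_cast
      linarith
    · have := hα.2.1 w (N.m w) (N.adj_of_ne w hw)
      simp only [hh, gcost, if_neg hw]
      linarith
  have hsum : (∑ w, h w) ≤ 0 := by
    have h1 : (∑ w, α (N.m w)) = ∑ w, α w := sum_comp_invol N α
    have h2 : (∑ w, (gcost G M N w : ℝ)) = 2 * (G.delta N M : ℝ) := by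
      rw [← Int.cast_sum, sum_gcost hG M N]; push_cast; ring
    have h3 : (0:ℝ) ≤ (G.delta N M : ℝ) := by exact_mod_cast hd
    simp only [hh, Finset.sum_sub_distrib, Finset.sum_add_distrib, h1, h2, hα.1]
    linarith
  have hz : ∀ w ∈ Finset.univ, h w = 0 := by
    have : (∑ w, h w) = 0 :=
      le_antisymm hsum (Finset.sum_nonneg hnn)
    exact (Finset.sum_eq_zero_iff_of_nonneg hnn).mp this
  have := hz u (Finset.mem_univ u)
  simp only [hh] at this
  linarith

lemma delta_neg [Fintype V] (M N : G.Matching) : G.delta M N = - G.delta N M := by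
  unfold RoommatesInstance.delta; ring

lemma delta_nonpos_of_stable [Fintype V] (hG : G.StrictPrefs) {S : G.Matching}
    (hS : G.Stable S) (M' : G.Matching) : G.delta M' S ≤ 0 := by
  have h2 : (∑ u, gcost G S M' u) = 2 * G.delta M' S := sum_gcost hG S M'
  have h1 : ∀ u ∈ Finset.univ, gcost G S M' u ≤ 0 := by
    intro u _
    unfold gcost RoommatesInstance.cost
    by_cases hw : M'.m u = u
    · rw [if_pos hw, if_pos rfl]
      split <;> norm_num
    · rw [if_neg hw, if_neg (fun h : u = M'.m u => hw h.symm)]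
      split
      · exact absurd (by assumption) (hS u (M'.m u))
      · split <;> norm_num
  have := Finset.sum_nonpos h1
  omega

lemma cost_tri (M : G.Matching) {u v : V} (huv : u ≠ v) :
    G.cost M u v = 2 ∨ G.cost M u v = -2 ∨ G.cost M u v = 0 := by
  unfold RoommatesInstance.cost
  rw [if_neg huv]
  split
  · exact Or.inl rfl
  · split
    · exact Or.inr (Or.inl rfl)
    · exact Or.inr (Or.inr rfl)

end RoommatesAux

open RoommatesInstance in
/-- Let `M` be a popular matching of a bipartite instance `G`,
`α ∈ {0,±1}^{A∪B}` a witness of `M`, and `𝒞` a connected component of the popular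
subgraph `F_G` (here `𝒞 = {w : PopConn v w}` for a vertex `v`).  Then either
`α_u = 0` for all `u ∈ 𝒞` or `α_u ∈ {±1}` for all `u ∈ 𝒞`; moreover if `𝒞`
contains unstable vertices then either all unstable vertices of `𝒞` are matched in
`M` or none of them is. -/
theorem witness_constant_parity_on_component {V : Type} [Fintype V]
    (G : RoommatesInstance V) (hG : G.StrictPrefs)
    (A : Set V) (hbip : ∀ u v, G.adj u v → (u ∈ A ↔ v ∉ A))
    (M : G.Matching) (hM : G.Popular M)
    (α : V → ℝ) (hα : G.IsWitness M α)
    (h01 : ∀ u, α u = 0 ∨ α u = 1 ∨ α u = -1)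
    (v : V) :
    ((∀ w, G.PopConn v w → α w = 0) ∨
      (∀ w, G.PopConn v w → α w = 1 ∨ α w = -1)) ∧
    ((∃ w, G.PopConn v w ∧ G.Unstable w) →
      ((∀ w, G.PopConn v w → G.Unstable w → M.m w ≠ w) ∨
        (∀ w, G.PopConn v w → G.Unstable w → M.m w = w))) := by
  classical
  -- along a popular edge, `α` is zero at one endpoint iff it is at the other
  have edge_iff : ∀ u w, G.PopularEdge u w → (α u = 0 ↔ α w = 0) := by
    rintro u w ⟨huw, N, hN, hNu⟩
    have ht := RoommatesAux.tight hG M N hα (hN M) u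
    have hNuu : N.m u ≠ u := by rw [hNu]; exact fun h => huw h.symm
    rw [show RoommatesAux.gcost G M N u = G.cost M u w by
      rw [RoommatesAux.gcost, if_neg hNuu, hNu]] at ht
    rw [hNu] at ht
    rcases RoommatesAux.cost_tri M huw with hc | hc | hc <;>
      rw [hc] at ht <;> push_cast at ht <;>
      rcases h01 u with h | h | h <;> rcases h01 w with g | g | g <;>
      constructor <;> intro hyp <;> linarith
  have conn_iff : ∀ w, G.PopConn v w → (α v = 0 ↔ α w = 0) := by
    intro w h
    induction h with
    | refl => exact Iff.rfl
    | tail _ hbc ih => exact ih.trans (edge_iff _ _ hbc)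
  -- an unstable vertex is unmatched in `M` iff its `α`-value is `0`
  have unstable_iff : ∀ w, G.Unstable w → (M.m w = w ↔ α w = 0) := by
    rintro w ⟨S, hS, hSw⟩
    have hd : 0 ≤ G.delta S M := by
      have h1 := RoommatesAux.delta_nonpos_of_stable hG hS M
      have h2 := RoommatesAux.delta_neg (G := G) M S
      omega
    have ht := RoommatesAux.tight hG M S hα hd w
    rw [show RoommatesAux.gcost G M S w = 2 * G.cost M w w by
      rw [RoommatesAux.gcost, if_pos hSw]] at ht
    rw [hSw] at ht
    constructor
    · intro hm
      rw [show G.cost M w w = 0 by rw [RoommatesInstance.cost, if_pos rfl, if_pos hm]]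
        at ht
      push_cast at ht; linarith
    · intro ha
      by_contra hm
      rw [show G.cost M w w = -1 by
        rw [RoommatesInstance.cost, if_pos rfl, if_neg hm]] at ht
      push_cast at ht; linarith
  constructor
  · by_cases hv : α v = 0
    · exact Or.inl fun w hw => (conn_iff w hw).mp hv
    · refine Or.inr fun w hw => ?_
      rcases h01 w with h | h | h
      · exact absurd ((conn_iff w hw).mpr h) hv
      · exact Or.inl h
      · exact Or.inr h
  · rintro ⟨w0, hw0, hu0⟩
    by_cases hv : α v = 0
    · exact Or.inr fun w hw hu => (unstable_iff w hu).mpr ((conn_iff w hw).mp hv)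
    · exact Or.inl fun w hw hu hm =>
        hv ((conn_iff w hw).mpr ((unstable_iff w hu).mp hm))
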